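/- Monomial change between Lusztig-type and Kashiwara-type coordinates: let (α_i)_{i∈I} be linear forms on V and (α_i^∨)_{i∈I} vectors in V with α_i(α_i^∨) = 2 for all i; let s_i act on V by s_i(v) = v − α_i(v)·α_i^∨ and on linear forms by s_i(ξ) = ξ − ξ(α_i^∨)·α_i. Fix a word (i₁,…,i_j) in I, set β_k = s_{i₁}∘⋯∘s_{i_{k−1}}(α_{i_k}) (a linear form) and β_k^∨ = s_{i₁}∘⋯∘s_{i_{k−1}}(α_{i_k}^∨) ∈ V, and let w = s_{i₁}∘⋯∘s_{i_j} acting on V. Then for positive reals t₁,…,t_j and c₁,…,c_j the following are equivalent: (ii) for all 1 ≤ k ≤ j, t_k = c_k·Π_{l<k} c_l^{α_{i_k}(α_{i_l}^∨)}; (iii) for all 1 ≤ k ≤ j, c_k = t_k·Π_{l<k} t_l^{β_k(β_l^∨)}. Moreover, in that case Σ_{k=1}^j log(c_k)·α_{i_k}^∨ = −Σ_{k=1}^j log(t_k)·w^{−1}(β_k^∨). -/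

import Mathlib

/-- The reflection `s_i` on vectors: `v ↦ v - ξ(v)·v₀`. -/
def reflV {V : Type*} [AddCommGroup V] [Module ℝ V]
    (ξ : V →ₗ[ℝ] ℝ) (v₀ : V) (v : V) : V :=
  v - ξ v • v₀

/-- The reflection `s_i` on linear forms: `η ↦ η - η(v₀)·ξ`. -/
noncomputable def reflF {V : Type*} [AddCommGroup V] [Module ℝ V]
    (ξ : V →ₗ[ℝ] ℝ) (v₀ : V) (η : V →ₗ[ℝ] ℝ) : V →ₗ[ℝ] ℝ :=
  η - η v₀ • ξ

/-- `β_k = s_{i₁} ∘ ⋯ ∘ s_{i_{k-1}} (α_{i_k})` as a linear form. -/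
noncomputable def betaForm {V : Type*} [AddCommGroup V] [Module ℝ V] {I : Type*}
    (a : I → V →ₗ[ℝ] ℝ) (av : I → V) {j : ℕ} (idx : Fin j → I) (k : Fin j) : V →ₗ[ℝ] ℝ :=
  ((List.ofFn idx).take k.1).foldr (fun i η => reflF (a i) (av i) η) (a (idx k))

/-- `β_k^∨ = s_{i₁} ∘ ⋯ ∘ s_{i_{k-1}} (α_{i_k}^∨)` as a vector. -/
def betaVec {V : Type*} [AddCommGroup V] [Module ℝ V] {I : Type*}
    (a : I → V →ₗ[ℝ] ℝ) (av : I → V) {j : ℕ} (idx : Fin j → I) (k : Fin j) : V :=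
  ((List.ofFn idx).take k.1).foldr (fun i v => reflV (a i) (av i) v) (av (idx k))

/-- `w⁻¹ = s_{i_j} ∘ ⋯ ∘ s_{i₁}` acting on `V`, where `w = s_{i₁} ∘ ⋯ ∘ s_{i_j}`. -/
def wInv {V : Type*} [AddCommGroup V] [Module ℝ V] {I : Type*}
    (a : I → V →ₗ[ℝ] ℝ) (av : I → V) {j : ℕ} (idx : Fin j → I) (v : V) : V :=
  (List.ofFn idx).foldl (fun u i => reflV (a i) (av i) u) v

section
variable {V : Type*} [AddCommGroup V] [Module ℝ V] {I : Type*}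

lemma reflF_apply (ξ : V →ₗ[ℝ] ℝ) (v₀ : V) (η : V →ₗ[ℝ] ℝ) (v : V) :
    reflF ξ v₀ η v = η (reflV ξ v₀ v) := by
  simp [reflF, reflV, mul_comm]

lemma reflV_reflV (ξ : V →ₗ[ℝ] ℝ) (v₀ : V) (h : ξ v₀ = 2) (u : V) :
    reflV ξ v₀ (reflV ξ v₀ u) = u := by
  simp only [reflV, map_sub, map_smul, h, smul_eq_mul]
  module

lemma reflV_neg (ξ : V →ₗ[ℝ] ℝ) (v₀ : V) (v : V) :
    reflV ξ v₀ (-v) = -(reflV ξ v₀ v) := by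
  simp only [reflV, map_neg, neg_smul]
  abel

lemma reflV_self (ξ : V →ₗ[ℝ] ℝ) (v₀ : V) (h : ξ v₀ = 2) :
    reflV ξ v₀ v₀ = -v₀ := by
  simp only [reflV, h]
  module

lemma foldr_reflF_apply (a : I → V →ₗ[ℝ] ℝ) (av : I → V) (L : List I) (η : V →ₗ[ℝ] ℝ) (v : V) :
    (L.foldr (fun i η => reflF (a i) (av i) η) η) v
      = η (L.foldl (fun u i => reflV (a i) (av i) u) v) := by
  induction L generalizing v with
  | nil => rfl
  | cons i L ih => rw [List.foldr_cons, reflF_apply, ih, List.foldl_cons]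

lemma foldl_cancel (a : I → V →ₗ[ℝ] ℝ) (av : I → V) (hpair : ∀ i, a i (av i) = 2) (L : List I) (v : V) :
    L.foldl (fun u i => reflV (a i) (av i) u)
      (L.foldr (fun i u => reflV (a i) (av i) u) v) = v := by
  induction L generalizing v with
  | nil => rfl
  | cons i L ih =>
    rw [List.foldr_cons, List.foldl_cons, reflV_reflV _ _ (hpair i), ih]

lemma foldl_neg (a : I → V →ₗ[ℝ] ℝ) (av : I → V) (L : List I) (v : V) :
    L.foldl (fun u i => reflV (a i) (av i) u) (-v)
      = - L.foldl (fun u i => reflV (a i) (av i) u) v := by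
  induction L generalizing v with
  | nil => rfl
  | cons i L ih => rw [List.foldl_cons, List.foldl_cons, reflV_neg, ih]

variable (a : I → V →ₗ[ℝ] ℝ) (av : I → V)

/-- `seg l n = s_{i_{n-1}} ⋯ s_{i_{l+1}} (α_{i_l}^∨)` (0-indexed). -/
def seg {j : ℕ} (idx : Fin j → I) (l : Fin j) (n : ℕ) : V :=
  (((List.ofFn idx).take n).drop (l.1+1)).foldl (fun u i => reflV (a i) (av i) u) (av (idx l))

lemma seg_succ {j : ℕ} (idx : Fin j → I) (l : Fin j) (n : ℕ) (hln : l.1 < n) (hnj : n < j) :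
    seg a av idx l (n+1) = reflV (a (idx ⟨n, hnj⟩)) (av (idx ⟨n, hnj⟩)) (seg a av idx l n) := by
  unfold seg
  have h1 : (List.ofFn idx).take (n+1) = (List.ofFn idx).take n ++ [idx ⟨n, hnj⟩] := by
    rw [List.take_succ]
    congr 1
    rw [List.getElem?_eq_getElem (by simpa using hnj)]
    simp
  rw [h1, List.drop_append_of_le_length (by simp; omega), List.foldl_append]
  rfl

lemma prefix_foldl_betaVec (hpair : ∀ i, a i (av i) = 2) {j : ℕ} (idx : Fin j → I)
    (l : Fin j) (n : ℕ) (hln : l.1 < n) (hnj : n ≤ j) :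
    ((List.ofFn idx).take n).foldl (fun u i => reflV (a i) (av i) u)
      (betaVec a av idx l) = - seg a av idx l n := by
  have hlen : ((List.ofFn idx).take n).length = n := by simp; omega
  conv_lhs => rw [← List.take_append_drop l.1 ((List.ofFn idx).take n)]
  rw [List.take_take, min_eq_left (by omega : l.1 ≤ n), List.foldl_append]
  rw [show (betaVec a av idx l : V)
      = ((List.ofFn idx).take l.1).foldr (fun i u => reflV (a i) (av i) u) (av (idx l)) from rfl]
  rw [foldl_cancel a av hpair]
  have hget : ((List.ofFn idx).take n).drop l.1
      = idx l :: ((List.ofFn idx).take n).drop (l.1+1) := by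
    rw [List.drop_eq_getElem_cons (by omega)]
    congr 1
    rw [List.getElem_take]
    simp
  rw [hget, List.foldl_cons, reflV_self _ _ (hpair (idx l)), foldl_neg]
  rfl

lemma betaForm_betaVec_eq (hpair : ∀ i, a i (av i) = 2) {j : ℕ} (idx : Fin j → I)
    {l k : Fin j} (hlk : l < k) :
    betaForm a av idx k (betaVec a av idx l) = - a (idx k) (seg a av idx l k.1) := by
  rw [show (betaForm a av idx k : V →ₗ[ℝ] ℝ)
      = ((List.ofFn idx).take k.1).foldr (fun i η => reflF (a i) (av i) η) (a (idx k)) from rfl]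
  rw [foldr_reflF_apply, prefix_foldl_betaVec a av hpair idx l k.1 hlk k.isLt.le, map_neg]

lemma seg_eq (hpair : ∀ i, a i (av i) = 2) {j : ℕ} (idx : Fin j → I) (l : Fin j) :
    ∀ n, l.1 + 1 ≤ n → n ≤ j →
    seg a av idx l n = av (idx l) + ∑ m ∈ Finset.univ.filter (fun m => l < m ∧ m.1 < n),
      (betaForm a av idx m (betaVec a av idx l)) • av (idx m) := by
  intro n hn1
  induction n, hn1 using Nat.le_induction with
  | base =>
    intro _
    have hempty : (Finset.univ.filter (fun m : Fin j => l < m ∧ m.1 < l.1 + 1)) = ∅ := by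
      apply Finset.filter_eq_empty_iff.mpr
      intro m _
      simp only [Fin.lt_def]
      omega
    rw [hempty]
    simp only [Finset.sum_empty, add_zero]
    unfold seg
    rw [List.drop_take]
    simp
  | succ n hn ih =>
    intro hnj
    have hnj' : n < j := hnj
    set m₀ : Fin j := ⟨n, hnj'⟩ with hm₀
    have hlm : l < m₀ := by simp [Fin.lt_def, hm₀]; omega
    have hB := betaForm_betaVec_eq a av hpair idx hlm
    have hrefl : reflV (a (idx m₀)) (av (idx m₀)) (seg a av idx l n)
        = seg a av idx l n + (betaForm a av idx m₀ (betaVec a av idx l)) • av (idx m₀) := by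
      rw [reflV]
      have : a (idx m₀) (seg a av idx l n) = - betaForm a av idx m₀ (betaVec a av idx l) := by
        rw [hB]; ring_nf; rfl
      rw [this, neg_smul, sub_neg_eq_add]
    have hfil : (Finset.univ.filter (fun m : Fin j => l < m ∧ m.1 < n + 1))
        = insert m₀ (Finset.univ.filter (fun m : Fin j => l < m ∧ m.1 < n)) := by
      ext m
      simp only [Finset.mem_filter, Finset.mem_insert, Finset.mem_univ, true_and,
        Fin.lt_def, Fin.ext_iff, hm₀]
      omega
    have hnotin : m₀ ∉ (Finset.univ.filter (fun m : Fin j => l < m ∧ m.1 < n)) := by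
      intro hmem
      simp only [hm₀, Finset.mem_filter, Finset.mem_univ, true_and, Fin.lt_def, Fin.val_mk] at hmem
      omega
    rw [seg_succ a av idx l n (by omega) hnj', hrefl, ih (by omega), hfil,
      Finset.sum_insert hnotin]
    abel

lemma star_identity (hpair : ∀ i, a i (av i) = 2) {j : ℕ} (idx : Fin j → I)
    {l k : Fin j} (hlk : l < k) :
    a (idx k) (av (idx l))
      + ∑ m ∈ Finset.univ.filter (fun m => l < m ∧ m.1 < k.1),
        (betaForm a av idx m (betaVec a av idx l)) * a (idx k) (av (idx m))
      = - betaForm a av idx k (betaVec a av idx l) := by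
  have h := congrArg (a (idx k)) (seg_eq a av hpair idx l k.1 hlk k.isLt.le)
  rw [betaForm_betaVec_eq a av hpair idx hlk] at *
  rw [map_add, map_sum] at h
  simp only [map_smul, smul_eq_mul] at h
  rw [neg_neg]
  linarith [h]

lemma wInv_betaVec (hpair : ∀ i, a i (av i) = 2) {j : ℕ} (idx : Fin j → I) (l : Fin j) :
    wInv a av idx (betaVec a av idx l)
      = -(av (idx l) + ∑ k ∈ Finset.univ.filter (fun k => l < k),
          (betaForm a av idx k (betaVec a av idx l)) • av (idx k)) := by
  have h1 : wInv a av idx (betaVec a av idx l) = - seg a av idx l j := by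
    rw [wInv, show (List.ofFn idx) = (List.ofFn idx).take j by simp]
    exact prefix_foldl_betaVec a av hpair idx l j l.isLt le_rfl
  rw [h1, seg_eq a av hpair idx l j l.isLt le_rfl]
  congr 2
  apply Finset.sum_congr
  · apply Finset.filter_congr
    intro m _
    simp [m.isLt]
  · intros; rfl

end

lemma sum_lt_swap_all {M : Type*} [AddCommMonoid M] {j : ℕ} (F : Fin j → Fin j → M) :
    ∑ k : Fin j, ∑ l ∈ Finset.univ.filter (· < k), F k l
      = ∑ l : Fin j, ∑ k ∈ Finset.univ.filter (fun k => l < k), F k l := by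
  simp only [Finset.sum_filter]
  exact Finset.sum_comm

lemma sum_lt_lt_swap {M : Type*} [AddCommMonoid M] {j : ℕ} (k : Fin j) (F : Fin j → Fin j → M) :
    ∑ l ∈ Finset.univ.filter (· < k), ∑ m ∈ Finset.univ.filter (· < l), F l m
      = ∑ m ∈ Finset.univ.filter (· < k),
          ∑ l ∈ Finset.univ.filter (fun l => m < l ∧ l.1 < k.1), F l m := by
  have hL : ∀ l : Fin j, (if l < k then ∑ m ∈ Finset.univ.filter (· < l), F l m else 0)
      = ∑ m : Fin j, if m < l ∧ l < k then F l m else 0 := by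
    intro l
    split_ifs with h
    · rw [Finset.sum_filter]
      apply Finset.sum_congr rfl
      intro m _
      simp [h]
    · symm
      apply Finset.sum_eq_zero
      intro m _
      rw [if_neg]
      rintro ⟨-, h2⟩
      exact h h2
  have hR : ∀ m : Fin j,
      (if m < k then ∑ l ∈ Finset.univ.filter (fun l => m < l ∧ l.1 < k.1), F l m else 0)
      = ∑ l : Fin j, if m < l ∧ l < k then F l m else 0 := by
    intro m
    split_ifs with h
    · rw [Finset.sum_filter]
      apply Finset.sum_congr rfl
      intro l _
      apply if_congr _ rfl rfl
      simp only [Fin.lt_def]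
    · symm
      apply Finset.sum_eq_zero
      intro l _
      rw [if_neg]
      rintro ⟨h1, h2⟩
      exact h (lt_trans h1 h2)
  rw [Finset.sum_filter, Finset.sum_filter]
  simp only [hL, hR]
  exact Finset.sum_comm

lemma eq_prod_iff_log {j : ℕ} (p q : ℝ) (hp : 0 < p) (hq : 0 < q)
    (s : Finset (Fin j)) (f : Fin j → ℝ) (g : Fin j → ℝ) (hf : ∀ l ∈ s, 0 < f l) :
    p = q * ∏ l ∈ s, f l ^ g l
      ↔ Real.log p = Real.log q + ∑ l ∈ s, Real.log (f l) * g l := by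
  have key : q * ∏ l ∈ s, f l ^ g l
      = Real.exp (Real.log q + ∑ l ∈ s, Real.log (f l) * g l) := by
    rw [Real.exp_add, Real.exp_log hq, Real.exp_sum]
    congr 1
    apply Finset.prod_congr rfl
    intro l hl
    rw [Real.rpow_def_of_pos (hf l hl)]
  rw [key]
  constructor
  · intro h
    rw [h, Real.log_exp]
  · intro h
    rw [← Real.exp_log hp, h]


/-- Monomial change between Lusztig-type and Kashiwara-type coordinates. -/
theorem monomial_change_lusztig_kashiwara
    {V : Type*} [AddCommGroup V] [Module ℝ V] {I : Type*}
    (a : I → V →ₗ[ℝ] ℝ) (av : I → V) (hpair : ∀ i, a i (av i) = 2)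
    {j : ℕ} (idx : Fin j → I)
    (t c : Fin j → ℝ) (ht : ∀ k, 0 < t k) (hc : ∀ k, 0 < c k) :
    ((∀ k, t k = c k * ∏ l ∈ Finset.univ.filter (· < k),
        c l ^ (a (idx k) (av (idx l)))) ↔
      (∀ k, c k = t k * ∏ l ∈ Finset.univ.filter (· < k),
        t l ^ (betaForm a av idx k (betaVec a av idx l)))) ∧
    ((∀ k, t k = c k * ∏ l ∈ Finset.univ.filter (· < k),
        c l ^ (a (idx k) (av (idx l)))) →
      ∑ k, Real.log (c k) • av (idx k) =
        -∑ k, Real.log (t k) • wInv a av idx (betaVec a av idx k)) := by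
  classical
  have hii : (∀ k, t k = c k * ∏ l ∈ Finset.univ.filter (· < k),
        c l ^ (a (idx k) (av (idx l))))
      ↔ (∀ k, Real.log (t k) = Real.log (c k)
          + ∑ l ∈ Finset.univ.filter (· < k),
            Real.log (c l) * (a (idx k) (av (idx l)))) :=
    forall_congr' fun k => eq_prod_iff_log (t k) (c k) (ht k) (hc k) _ _ _ (fun l _ => hc l)
  have hiii : (∀ k, c k = t k * ∏ l ∈ Finset.univ.filter (· < k),
        t l ^ (betaForm a av idx k (betaVec a av idx l)))
      ↔ (∀ k, Real.log (c k) = Real.log (t k)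
          + ∑ l ∈ Finset.univ.filter (· < k),
            Real.log (t l) * (betaForm a av idx k (betaVec a av idx l))) :=
    forall_congr' fun k => eq_prod_iff_log (c k) (t k) (hc k) (ht k) _ _ _ (fun l _ => ht l)
  -- core implication at the level of logarithms
  have core : ∀ (x y : Fin j → ℝ),
      (∀ k, y k = x k + ∑ l ∈ Finset.univ.filter (· < k),
        x l * betaForm a av idx k (betaVec a av idx l)) →
      ∀ k, x k = y k + ∑ l ∈ Finset.univ.filter (· < k),
        y l * a (idx k) (av (idx l)) := by
    intro x y hY k
    have hsum : ∑ l ∈ Finset.univ.filter (· < k), y l * a (idx k) (av (idx l))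
        = - ∑ l ∈ Finset.univ.filter (· < k),
            x l * betaForm a av idx k (betaVec a av idx l) := by
      calc ∑ l ∈ Finset.univ.filter (· < k), y l * a (idx k) (av (idx l))
          = ∑ l ∈ Finset.univ.filter (· < k),
              ((x l + ∑ m ∈ Finset.univ.filter (· < l),
                x m * betaForm a av idx l (betaVec a av idx m)) * a (idx k) (av (idx l))) := by
            refine Finset.sum_congr rfl fun l _ => ?_
            rw [hY l]
        _ = ∑ l ∈ Finset.univ.filter (· < k), x l * a (idx k) (av (idx l))
            + ∑ l ∈ Finset.univ.filter (· < k), ∑ m ∈ Finset.univ.filter (· < l),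
                (x m * betaForm a av idx l (betaVec a av idx m)) * a (idx k) (av (idx l)) := by
            rw [← Finset.sum_add_distrib]
            refine Finset.sum_congr rfl fun l _ => ?_
            rw [add_mul, Finset.sum_mul]
        _ = ∑ l ∈ Finset.univ.filter (· < k), x l * a (idx k) (av (idx l))
            + ∑ m ∈ Finset.univ.filter (· < k),
                ∑ l ∈ Finset.univ.filter (fun l => m < l ∧ l.1 < k.1),
                  (x m * betaForm a av idx l (betaVec a av idx m)) * a (idx k) (av (idx l)) := by
            rw [sum_lt_lt_swap k
              (fun l m => (x m * betaForm a av idx l (betaVec a av idx m)) * a (idx k) (av (idx l)))]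
        _ = ∑ m ∈ Finset.univ.filter (· < k),
              x m * (a (idx k) (av (idx m))
                + ∑ l ∈ Finset.univ.filter (fun l => m < l ∧ l.1 < k.1),
                    betaForm a av idx l (betaVec a av idx m) * a (idx k) (av (idx l))) := by
            rw [← Finset.sum_add_distrib]
            refine Finset.sum_congr rfl fun m _ => ?_
            rw [mul_add, Finset.mul_sum]
            congr 1
            refine Finset.sum_congr rfl fun l _ => ?_
            ring
        _ = ∑ m ∈ Finset.univ.filter (· < k),
              x m * (- betaForm a av idx k (betaVec a av idx m)) := by
            refine Finset.sum_congr rfl fun m hm => ?_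
            have hmk : m < k := by simpa using hm
            rw [star_identity a av hpair idx hmk]
        _ = - ∑ l ∈ Finset.univ.filter (· < k),
              x l * betaForm a av idx k (betaVec a av idx l) := by
            rw [← Finset.sum_neg_distrib]
            refine Finset.sum_congr rfl fun m _ => ?_
            ring
    rw [hsum, hY k]
    ring
  have dir2 : (∀ k, Real.log (c k) = Real.log (t k)
        + ∑ l ∈ Finset.univ.filter (· < k),
          Real.log (t l) * (betaForm a av idx k (betaVec a av idx l))) →
      (∀ k, Real.log (t k) = Real.log (c k)
        + ∑ l ∈ Finset.univ.filter (· < k),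
          Real.log (c l) * (a (idx k) (av (idx l)))) :=
    core (fun k => Real.log (t k)) (fun k => Real.log (c k))
  have dir1 : (∀ k, Real.log (t k) = Real.log (c k)
        + ∑ l ∈ Finset.univ.filter (· < k),
          Real.log (c l) * (a (idx k) (av (idx l)))) →
      (∀ k, Real.log (c k) = Real.log (t k)
        + ∑ l ∈ Finset.univ.filter (· < k),
          Real.log (t l) * (betaForm a av idx k (betaVec a av idx l))) := by
    intro hX
    set y' : Fin j → ℝ := fun k => Real.log (t k)
      + ∑ l ∈ Finset.univ.filter (· < k),
          Real.log (t l) * (betaForm a av idx k (betaVec a av idx l)) with hy'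
    have hX' : ∀ k, Real.log (t k) = y' k + ∑ l ∈ Finset.univ.filter (· < k),
        y' l * a (idx k) (av (idx l)) :=
      core (fun k => Real.log (t k)) y' (fun k => rfl)
    have hyy : ∀ n, ∀ k : Fin j, k.1 = n → Real.log (c k) = y' k := by
      intro n
      induction n using Nat.strong_induction_on with
      | _ n ih =>
        intro k hk
        have h1 := hX k
        have h2 := hX' k
        have h3 : ∑ l ∈ Finset.univ.filter (· < k), Real.log (c l) * (a (idx k) (av (idx l)))
            = ∑ l ∈ Finset.univ.filter (· < k), y' l * a (idx k) (av (idx l)) := by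
          refine Finset.sum_congr rfl fun l hl => ?_
          have hlk : l < k := by simpa using hl
          rw [ih l.1 (by rw [← hk]; exact hlk) l rfl]
        rw [h3] at h1
        have h4 := h1.symm.trans h2
        linarith
    intro k
    rw [hyy k.1 k rfl]
  constructor
  · rw [hii, hiii]
    exact ⟨dir1, dir2⟩
  · intro hraw
    have hY : ∀ k, Real.log (c k) = Real.log (t k)
        + ∑ l ∈ Finset.univ.filter (· < k),
          Real.log (t l) * (betaForm a av idx k (betaVec a av idx l)) :=
      dir1 (hii.mp hraw)
    calc ∑ k, Real.log (c k) • av (idx k)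
        = ∑ k, (Real.log (t k)
            + ∑ l ∈ Finset.univ.filter (· < k),
              Real.log (t l) * (betaForm a av idx k (betaVec a av idx l))) • av (idx k) := by
          refine Finset.sum_congr rfl fun k _ => ?_
          rw [hY k]
      _ = ∑ k, Real.log (t k) • av (idx k)
          + ∑ k, ∑ l ∈ Finset.univ.filter (· < k),
              (Real.log (t l) * (betaForm a av idx k (betaVec a av idx l))) • av (idx k) := by
          rw [← Finset.sum_add_distrib]
          refine Finset.sum_congr rfl fun k _ => ?_
          rw [add_smul, Finset.sum_smul]
      _ = ∑ k, Real.log (t k) • av (idx k)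
          + ∑ l : Fin j, ∑ k ∈ Finset.univ.filter (fun k => l < k),
              (Real.log (t l) * (betaForm a av idx k (betaVec a av idx l))) • av (idx k) := by
          rw [sum_lt_swap_all
            (fun k l => (Real.log (t l) * (betaForm a av idx k (betaVec a av idx l))) • av (idx k))]
      _ = ∑ l : Fin j, Real.log (t l) • (av (idx l)
            + ∑ k ∈ Finset.univ.filter (fun k => l < k),
              (betaForm a av idx k (betaVec a av idx l)) • av (idx k)) := by
          rw [← Finset.sum_add_distrib]
          refine Finset.sum_congr rfl fun l _ => ?_
          rw [smul_add, Finset.smul_sum]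
          congr 1
          refine Finset.sum_congr rfl fun k _ => ?_
          rw [mul_smul]
      _ = ∑ l : Fin j, Real.log (t l) • (- wInv a av idx (betaVec a av idx l)) := by
          refine Finset.sum_congr rfl fun l _ => ?_
          rw [wInv_betaVec a av hpair idx l, neg_neg]
      _ = - ∑ k, Real.log (t k) • wInv a av idx (betaVec a av idx k) := by
          rw [← Finset.sum_neg_distrib]
          refine Finset.sum_congr rfl fun l _ => ?_
          rw [smul_neg]
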